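/- Suppose f : ℝ^d → ℝ is twice differentiable with ρ-Lipschitz Hessian, H symmetric with ‖H - ∇²f(y)‖ ≤ ε, and s satisfies ‖∇m(s)‖ ≤ κ min(1,‖s‖)·min(‖s‖, ‖∇f(y)‖) where m(s) = f(y) + sᵀ∇f(y) + (1/2)sᵀHs + (σ/3)‖s‖³. Then sᵀ∇f(y+s) ≤ (ρ/2 + κ - σ)‖s‖³ + ε‖s‖². -/

import Mathlib

open RealInnerProductSpace Set

-- quadratic Taylor bound for a function with Lipschitz derivative
theorem taylor_quad {E : Type*} [NormedAddCommGroup E] [NormedSpace ℝ E]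
    (g : E → E) (ρ : ℝ) (hρ : 0 ≤ ρ)
    (hdiff2 : Differentiable ℝ g)
    (hlip : ∀ u v, ‖fderiv ℝ g u - fderiv ℝ g v‖ ≤ ρ * ‖u - v‖)
    (y s : E) :
    ‖g (y + s) - g y - fderiv ℝ g y s‖ ≤ ρ / 2 * ‖s‖ ^ 2 := by
  set ψ : ℝ → E := fun t => g (y + t • s) - g y - t • (fderiv ℝ g y s) with hψ
  have hc : ∀ t : ℝ, HasDerivAt (fun t : ℝ => y + t • s) s t := by
    intro t
    simpa using (((hasDerivAt_id t).smul_const s).const_add y)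
  have hderiv : ∀ t : ℝ, HasDerivAt ψ (fderiv ℝ g (y + t • s) s - fderiv ℝ g y s) t := by
    intro t
    have h1 : HasDerivAt (fun t : ℝ => g (y + t • s)) (fderiv ℝ g (y + t • s) s) t :=
      (hdiff2 (y + t • s)).hasFDerivAt.comp_hasDerivAt t (hc t)
    have h2 : HasDerivAt (fun t : ℝ => t • (fderiv ℝ g y s)) (fderiv ℝ g y s) t := by
      simpa using (hasDerivAt_id t).smul_const (fderiv ℝ g y s)
    exact (h1.sub_const (g y)).sub h2
  have key : ∀ x ∈ Icc (0:ℝ) 1, ‖ψ x‖ ≤ ρ * ‖s‖ ^ 2 * x ^ 2 / 2 := by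
    intro x hx
    refine image_norm_le_of_norm_deriv_right_le_deriv_boundary (f := ψ) (a := 0) (b := 1)
      (B := fun t => ρ * ‖s‖ ^ 2 * t ^ 2 / 2)
      (f' := fun t => fderiv ℝ g (y + t • s) s - fderiv ℝ g y s)
      (B' := fun t => ρ * ‖s‖ ^ 2 * t) ?_ ?_ ?_ ?_ ?_ hx
    · exact fun t ht => (hderiv t).continuousAt.continuousWithinAt
    · exact fun t ht => (hderiv t).hasDerivWithinAt
    · simp [hψ]
    · intro t
      have : HasDerivAt (fun x : ℝ => ρ * ‖s‖ ^ 2 * x ^ 2 / 2) (ρ * ‖s‖ ^ 2 * (2 * t) / 2) t := by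
        exact (((hasDerivAt_pow 2 t).const_mul (ρ * ‖s‖ ^ 2)).div_const 2).congr_deriv (by ring)
      convert this using 1; ring
    · intro t ht
      calc ‖(fderiv ℝ g (y + t • s) - fderiv ℝ g y) s‖
          ≤ ‖fderiv ℝ g (y + t • s) - fderiv ℝ g y‖ * ‖s‖ :=
            (fderiv ℝ g (y + t • s) - fderiv ℝ g y).le_opNorm s
        _ ≤ ρ * ‖y + t • s - y‖ * ‖s‖ :=
            mul_le_mul_of_nonneg_right (hlip _ _) (norm_nonneg s)
        _ = ρ * (t * ‖s‖) * ‖s‖ := by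
            rw [add_sub_cancel_left, norm_smul, Real.norm_eq_abs, abs_of_nonneg ht.1]
        _ ≤ ρ * ‖s‖ ^ 2 * t := by ring_nf; rfl
  have h1 := key 1 (by norm_num)
  simp only [hψ, one_smul, one_pow] at h1
  linarith

theorem stmt_16 (d : ℕ) (f : EuclideanSpace ℝ (Fin d) → ℝ) (ρ ε σ κ : ℝ)
    (hρ : 0 ≤ ρ) (hε : 0 ≤ ε) (hσ : 0 < σ) (hκ : 0 < κ)
    (hdiff : Differentiable ℝ f) (hdiff2 : Differentiable ℝ (gradient f))
    (hlipH : ∀ u v, ‖fderiv ℝ (gradient f) u - fderiv ℝ (gradient f) v‖ ≤ ρ * ‖u - v‖)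
    (y s : EuclideanSpace ℝ (Fin d))
    (H : EuclideanSpace ℝ (Fin d) →L[ℝ] EuclideanSpace ℝ (Fin d))
    (hsym : ∀ u v, ⟪H u, v⟫ = ⟪u, H v⟫)
    (hHapprox : ‖H - fderiv ℝ (gradient f) y‖ ≤ ε)
    (happrox : ‖gradient f y + H s + (σ * ‖s‖) • s‖ ≤
      κ * min 1 ‖s‖ * min ‖s‖ ‖gradient f y‖) :
    ⟪s, gradient f (y + s)⟫ ≤ (ρ / 2 + κ - σ) * ‖s‖ ^ 3 + ε * ‖s‖ ^ 2 := by
  set g := gradient f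
  set A := fderiv ℝ g y with hA
  set w : EuclideanSpace ℝ (Fin d) := g (y + s) - g y - A s with hw
  set v : EuclideanSpace ℝ (Fin d) := g y + H s + (σ * ‖s‖) • s with hv
  have hwbound : ‖w‖ ≤ ρ / 2 * ‖s‖ ^ 2 := taylor_quad g ρ hρ hdiff2 hlipH y s
  have hdecomp : g (y + s) = w + v + ((A - H) s - (σ * ‖s‖) • s) := by
    simp only [hw, hv, ContinuousLinearMap.sub_apply]
    abel
  have hvbound : ‖v‖ ≤ κ * ‖s‖ ^ 2 := by
    refine happrox.trans ?_
    have h1 : min 1 ‖s‖ ≤ ‖s‖ := min_le_right _ _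
    have h2 : min ‖s‖ ‖g y‖ ≤ ‖s‖ := min_le_left _ _
    have h3 : (0:ℝ) ≤ min ‖s‖ ‖g y‖ := le_min (norm_nonneg _) (norm_nonneg _)
    calc κ * min 1 ‖s‖ * min ‖s‖ ‖g y‖ ≤ κ * ‖s‖ * ‖s‖ := by
          apply mul_le_mul (mul_le_mul le_rfl h1 (le_min zero_le_one (norm_nonneg _)) hκ.le)
            h2 h3 (by positivity)
      _ = κ * ‖s‖ ^ 2 := by ring
  have hAH : ‖(A - H) s‖ ≤ ε * ‖s‖ := by
    calc ‖(A - H) s‖ ≤ ‖A - H‖ * ‖s‖ := (A - H).le_opNorm s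
      _ ≤ ε * ‖s‖ := by
          have : ‖A - H‖ = ‖H - A‖ := norm_sub_rev _ _
          exact mul_le_mul_of_nonneg_right (this ▸ hHapprox) (norm_nonneg s)
  have e1 : ⟪s, w⟫ ≤ ‖s‖ * (ρ / 2 * ‖s‖ ^ 2) :=
    (real_inner_le_norm s w).trans (mul_le_mul_of_nonneg_left hwbound (norm_nonneg s))
  have e2 : ⟪s, v⟫ ≤ ‖s‖ * (κ * ‖s‖ ^ 2) :=
    (real_inner_le_norm s v).trans (mul_le_mul_of_nonneg_left hvbound (norm_nonneg s))
  have e3 : ⟪s, (A - H) s⟫ ≤ ‖s‖ * (ε * ‖s‖) :=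
    (real_inner_le_norm s _).trans (mul_le_mul_of_nonneg_left hAH (norm_nonneg s))
  have e4 : ⟪s, (σ * ‖s‖) • s⟫ = σ * ‖s‖ * ‖s‖ ^ 2 := by
    rw [real_inner_smul_right, real_inner_self_eq_norm_sq]
  have hsplit : ⟪s, g (y + s)⟫ = ⟪s, w⟫ + ⟪s, v⟫ + ⟪s, (A - H) s⟫ - ⟪s, (σ * ‖s‖) • s⟫ := by
    rw [hdecomp]
    simp only [inner_add_right, inner_sub_right]
    ring
  rw [hsplit, e4]
  nlinarith [norm_nonneg s, sq_nonneg (‖s‖)]
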